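/- Let $f : (0,\infty) \to [0,\infty)$ be nonincreasing and let $f^{**}(t) = \frac{1}{t}\int_0^t f(s)\,ds$. Then for $1 < q < \infty$, $\left(\int_0^\infty f(t)^q\,dt\right)^{1/q} \leq \left(\frac{q-1}{q}\right)^{1/q} \left(\int_0^\infty f^{**}(t)^q\,dt\right)^{1/q}$ (the sharp reverse Hardy inequality for nonincreasing functions). -/

import Mathlib

open Set MeasureTheory Filter Topology
open scoped ENNReal

namespace Stmt5

noncomputable def F (f : ℝ → ℝ) (t : ℝ) : ℝ := ∫ s in Ioc (0:ℝ) t, f s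
noncomputable def L (f : ℝ → ℝ) (t : ℝ) : ℝ := sSup (f '' Ioi t)

variable {f : ℝ → ℝ}

lemma bddAbove_im (hmono : AntitoneOn f (Ioi 0)) {t : ℝ} (ht : 0 < t) :
    BddAbove (f '' Ioi t) := by
  refine ⟨f t, ?_⟩
  rintro _ ⟨s, hs, rfl⟩
  exact hmono ht (ht.trans hs) (le_of_lt hs)

lemma L_le (hmono : AntitoneOn f (Ioi 0)) {t : ℝ} (ht : 0 < t) : L f t ≤ f t := by
  refine csSup_le ⟨f (t+1), ⟨t+1, by simp, rfl⟩⟩ ?_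
  rintro _ ⟨s, hs, rfl⟩
  exact hmono ht (ht.trans hs) (le_of_lt hs)

lemma le_L (hmono : AntitoneOn f (Ioi 0)) {t s : ℝ} (ht : 0 < t) (hs : t < s) :
    f s ≤ L f t :=
  le_csSup (bddAbove_im hmono ht) ⟨s, hs, rfl⟩

lemma L_nonneg (hf0 : ∀ t, 0 < t → 0 ≤ f t) (hmono : AntitoneOn f (Ioi 0)) {t : ℝ}
    (ht : 0 < t) : 0 ≤ L f t :=
  (hf0 (t+1) (by linarith)).trans (le_L hmono ht (by linarith))

lemma L_anti (hmono : AntitoneOn f (Ioi 0)) : AntitoneOn (L f) (Ioi 0) := by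
  intro t ht s hs hts
  refine csSup_le_csSup (bddAbove_im hmono ht) ⟨f (s+1), ⟨s+1, by simp, rfl⟩⟩ ?_
  exact image_mono (Ioi_subset_Ioi hts)

lemma tendsto_L (hmono : AntitoneOn f (Ioi 0)) {t : ℝ} (ht : 0 < t) :
    Tendsto f (𝓝[>] t) (𝓝 (L f t)) :=
  AntitoneOn.tendsto_nhdsGT (hmono.mono (Ioi_subset_Ioi ht.le))
    (bddAbove_im hmono ht)

lemma L_ae_eq (hmono : AntitoneOn f (Ioi 0)) :
    ∀ᵐ t ∂(volume.restrict (Ioi (0:ℝ))), L f t = f t := by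
  have hc : ({t | 0 < t ∧ L f t ≠ f t} : Set ℝ).Countable := by
    refine (countable_image_gt_image_Ioi f).mono ?_
    rintro t ⟨ht, hne⟩
    exact ⟨L f t, lt_of_le_of_ne (L_le hmono ht) hne, fun y hy => le_L hmono ht hy⟩
  have h0 : volume {t | 0 < t ∧ L f t ≠ f t} = 0 := hc.measure_zero _
  rw [ae_restrict_iff' measurableSet_Ioi, ae_iff]
  refine measure_mono_null ?_ h0
  intro t ht
  simp only [mem_setOf_eq, not_forall, mem_Ioi] at ht
  obtain ⟨h1, h2⟩ := ht
  exact ⟨h1, h2⟩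

lemma F_add (hloc : ∀ t, 0 < t → IntegrableOn f (Ioc 0 t)) {t u : ℝ} (ht : 0 < t)
    (htu : t ≤ u) : F f u = F f t + ∫ s in Ioc t u, f s := by
  rw [F, F, ← setIntegral_union (Ioc_disjoint_Ioc_of_le le_rfl) measurableSet_Ioc
    ((hloc u (ht.trans_le htu)).mono_set (Ioc_subset_Ioc_right htu))
    ((hloc u (ht.trans_le htu)).mono_set (Ioc_subset_Ioc_left ht.le)),
    Ioc_union_Ioc_eq_Ioc ht.le htu]

lemma F_nonneg (hf0 : ∀ t, 0 < t → 0 ≤ f t) (t : ℝ) : 0 ≤ F f t :=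
  setIntegral_nonneg measurableSet_Ioc fun s hs => hf0 s hs.1

lemma F_mono (hf0 : ∀ t, 0 < t → 0 ≤ f t) (hloc : ∀ t, 0 < t → IntegrableOn f (Ioc 0 t))
    {t u : ℝ} (ht : 0 < t) (htu : t ≤ u) : F f t ≤ F f u := by
  rw [F_add hloc ht htu]
  have : 0 ≤ ∫ s in Ioc t u, f s :=
    setIntegral_nonneg measurableSet_Ioc fun s hs => hf0 s (ht.trans hs.1)
  linarith

lemma integral_Ioc_le (hint : IntegrableOn f (Ioc t u)) {C : ℝ} (htu : t ≤ u)
    (hC : ∀ s, s ∈ Ioc t u → f s ≤ C) : ∫ s in Ioc t u, f s ≤ C * (u - t) := by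
  calc ∫ s in Ioc t u, f s ≤ ∫ _ in Ioc t u, C := by
        refine setIntegral_mono_on hint (integrableOn_const ?_) measurableSet_Ioc hC
        rw [Real.volume_Ioc]; exact ENNReal.ofReal_ne_top
    _ = C * (u - t) := by
        rw [setIntegral_const, measureReal_def, Real.volume_Ioc, smul_eq_mul,
          ENNReal.toReal_ofReal (by linarith)]
        ring

lemma le_integral_Ioc (hint : IntegrableOn f (Ioc t u)) {c : ℝ} (htu : t ≤ u)
    (hc : ∀ s, s ∈ Ioc t u → c ≤ f s) : c * (u - t) ≤ ∫ s in Ioc t u, f s := by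
  calc c * (u - t) = ∫ _ in Ioc t u, c := by
        rw [setIntegral_const, measureReal_def, Real.volume_Ioc, smul_eq_mul,
          ENNReal.toReal_ofReal (by linarith)]
        ring
    _ ≤ ∫ s in Ioc t u, f s := by
        refine setIntegral_mono_on (integrableOn_const ?_) hint measurableSet_Ioc hc
        rw [Real.volume_Ioc]; exact ENNReal.ofReal_ne_top

/-- `t f(t) ≤ F(t)` for `t > 0`. -/
lemma tf_le_F (hmono : AntitoneOn f (Ioi 0)) (hloc : ∀ t, 0 < t → IntegrableOn f (Ioc 0 t))
    {t : ℝ} (ht : 0 < t) : t * f t ≤ F f t := by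
  have h := le_integral_Ioc (hloc t ht) (le_of_lt ht)
    (c := f t) (fun s hs => hmono hs.1 ht hs.2)
  rw [F]
  calc t * f t = f t * (t - 0) := by ring
    _ ≤ _ := h

/-- `F s / s ≤ F t / t` for `0 < t ≤ s`, in product form. -/
lemma Fstar_anti (hf0 : ∀ t, 0 < t → 0 ≤ f t) (hmono : AntitoneOn f (Ioi 0))
    (hloc : ∀ t, 0 < t → IntegrableOn f (Ioc 0 t)) {t s : ℝ} (ht : 0 < t) (hts : t ≤ s) :
    F f s * t ≤ F f t * s := by
  have h1 : ∫ x in Ioc t s, f x ≤ f t * (s - t) :=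
    integral_Ioc_le ((hloc s (ht.trans_le hts)).mono_set (Ioc_subset_Ioc_left ht.le)) hts
      (fun x hx => hmono ht (ht.trans hx.1) hx.1.le)
  have h2 := tf_le_F hmono hloc ht
  have h3 := F_add hloc ht hts
  nlinarith [F_nonneg hf0 (f := f) t, hf0 t ht]

lemma F_cont (hf0 : ∀ t, 0 < t → 0 ≤ f t) (hmono : AntitoneOn f (Ioi 0))
    (hloc : ∀ t, 0 < t → IntegrableOn f (Ioc 0 t)) {a : ℝ} (ha : 0 < a) :
    ContinuousOn (F f) (Ici a) := by
  have key : ∀ x ∈ Ici a, ∀ y ∈ Ici a, dist (F f x) (F f y) ≤ (f a).toNNReal * dist x y := by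
    have main : ∀ x ∈ Ici a, ∀ y ∈ Ici a, x ≤ y →
        dist (F f x) (F f y) ≤ (f a).toNNReal * dist x y := by
      intro x hx y hy hxy
      have hax : 0 < x := ha.trans_le hx
      have h1 : ∫ s in Ioc x y, f s ≤ f a * (y - x) :=
        integral_Ioc_le ((hloc y (hax.trans_le hxy)).mono_set (Ioc_subset_Ioc_left hax.le))
          hxy (fun s hs => hmono ha (ha.trans_le (hx.trans hs.1.le)) (hx.trans hs.1.le))
      have h2 : 0 ≤ ∫ s in Ioc x y, f s :=
        setIntegral_nonneg measurableSet_Ioc fun s hs => hf0 s (hax.trans hs.1)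
      have h3 := F_add hloc hax hxy
      rw [Real.dist_eq, Real.dist_eq, Real.coe_toNNReal _ (hf0 a ha)]
      rw [abs_of_nonpos (by linarith), abs_of_nonpos (by linarith)]
      linarith
    intro x hx y hy
    rcases le_total x y with h | h
    · exact main x hx y hy h
    · rw [dist_comm (F f x), dist_comm x]; exact main y hy x hx h
  exact (LipschitzOnWith.of_dist_le_mul key).continuousOn

lemma F_hasDeriv (hf0 : ∀ t, 0 < t → 0 ≤ f t) (hmono : AntitoneOn f (Ioi 0))
    (hloc : ∀ t, 0 < t → IntegrableOn f (Ioc 0 t)) {t : ℝ} (ht : 0 < t) :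
    HasDerivWithinAt (F f) (L f t) (Ioi t) t := by
  rw [hasDerivWithinAt_iff_tendsto_slope]
  have hdiff : Ioi t \ {t} = Ioi t := diff_singleton_eq_self (fun h => lt_irrefl t h)
  rw [hdiff]
  have hslope : ∀ u ∈ Ioi t, f u ≤ slope (F f) t u ∧ slope (F f) t u ≤ L f t := by
    intro u hu
    have htu : t < u := hu
    have hint : IntegrableOn f (Ioc t u) :=
      (hloc u (ht.trans htu)).mono_set (Ioc_subset_Ioc_left ht.le)
    have hFa := F_add hloc ht htu.le
    have h1 : f u * (u - t) ≤ ∫ s in Ioc t u, f s :=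
      le_integral_Ioc hint htu.le fun s hs => hmono (ht.trans hs.1) (ht.trans htu) hs.2
    have h2 : ∫ s in Ioc t u, f s ≤ L f t * (u - t) :=
      integral_Ioc_le hint htu.le fun s hs => le_L hmono ht hs.1
    have hut : 0 < u - t := by linarith
    have hs : slope (F f) t u = (∫ s in Ioc t u, f s) / (u - t) := by
      rw [slope_def_field, hFa, div_eq_div_iff (sub_ne_zero.2 (by linarith)) (sub_ne_zero.2 (by linarith))]
      ring
    constructor
    · rw [hs, le_div_iff₀ hut]; linarith
    · rw [hs, div_le_iff₀ hut]; linarith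
  refine tendsto_of_tendsto_of_tendsto_of_le_of_le' (tendsto_L hmono ht)
    tendsto_const_nhds ?_ ?_
  · exact eventually_nhdsWithin_of_forall fun u hu => (hslope u hu).1
  · exact eventually_nhdsWithin_of_forall fun u hu => (hslope u hu).2

lemma L_aemeas (hmono : AntitoneOn f (Ioi 0)) {a b : ℝ} (ha : 0 < a) :
    AEMeasurable (L f) (volume.restrict (Ioc a b)) := by
  have hMa : Antitone (fun x => L f (a ⊔ (x ⊓ b))) := by
    intro x y hxy
    exact L_anti hmono (mem_Ioi.2 (lt_of_lt_of_le ha le_sup_left))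
      (mem_Ioi.2 (lt_of_lt_of_le ha le_sup_left))
      (sup_le_sup_left (inf_le_inf_right b hxy) a)
  refine (hMa.measurable.aemeasurable).congr ?_
  filter_upwards [ae_restrict_mem measurableSet_Ioc] with x hx
  show L f (a ⊔ (x ⊓ b)) = L f x
  rw [inf_eq_left.2 hx.2, sup_eq_right.2 hx.1.le]

variable {q : ℝ}

lemma F_aemeas (hf0 : ∀ t, 0 < t → 0 ≤ f t) (hmono : AntitoneOn f (Ioi 0))
    (hloc : ∀ t, 0 < t → IntegrableOn f (Ioc 0 t)) {a b : ℝ} (ha : 0 < a) :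
    AEMeasurable (F f) (volume.restrict (Ioc a b)) :=
  (((F_cont hf0 hmono hloc ha).mono (Ioc_subset_Icc_self.trans Icc_subset_Ici_self)).aemeasurable
    measurableSet_Ioc)

lemma X_integrable (hf0 : ∀ t, 0 < t → 0 ≤ f t) (hmono : AntitoneOn f (Ioi 0))
    (hloc : ∀ t, 0 < t → IntegrableOn f (Ioc 0 t)) (hq : 1 < q) {a b : ℝ} (ha : 0 < a)
    (hab : a ≤ b) :
    IntegrableOn (fun t => L f t * F f t ^ (q-1) * t ^ (1-q)) (Ioc a b) := by
  have hb : 0 < b := ha.trans_le hab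
  have hmeas : AEMeasurable (fun t => L f t * F f t ^ (q-1) * t ^ (1-q))
      (volume.restrict (Ioc a b)) :=
    ((L_aemeas hmono ha).mul ((F_aemeas hf0 hmono hloc ha).pow_const _)).mul
      (measurable_id.aemeasurable.pow_const _)
  refine Integrable.mono' (g := fun _ => f a * F f b ^ (q-1) * a ^ (1-q)) ?_
    hmeas.aestronglyMeasurable ?_
  · refine integrableOn_const ?_
    rw [Real.volume_Ioc]; exact ENNReal.ofReal_ne_top
  · filter_upwards [ae_restrict_mem measurableSet_Ioc] with t htm
    have ht : 0 < t := ha.trans htm.1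
    have h1 : 0 ≤ L f t := L_nonneg hf0 hmono ht
    have h2 : L f t ≤ f a := (L_le hmono ht).trans (hmono ha (ha.trans htm.1) htm.1.le)
    have h3 : F f t ^ (q-1) ≤ F f b ^ (q-1) :=
      Real.rpow_le_rpow (F_nonneg hf0 t) (F_mono hf0 hloc ht htm.2) (by linarith)
    have h4 : (0:ℝ) ≤ F f t ^ (q-1) := Real.rpow_nonneg (F_nonneg hf0 t) _
    have h5 : t ^ (1-q) ≤ a ^ (1-q) :=
      Real.rpow_le_rpow_of_nonpos ha htm.1.le (by linarith)
    have h6 : (0:ℝ) ≤ t ^ (1-q) := Real.rpow_nonneg ht.le _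
    rw [Real.norm_eq_abs, abs_of_nonneg (by positivity)]
    exact mul_le_mul (mul_le_mul h2 h3 h4 (hf0 a ha)) h5 h6
      (mul_nonneg (hf0 a ha) (Real.rpow_nonneg (F_nonneg hf0 b) _))

lemma Y_integrable (hf0 : ∀ t, 0 < t → 0 ≤ f t) (hmono : AntitoneOn f (Ioi 0))
    (hloc : ∀ t, 0 < t → IntegrableOn f (Ioc 0 t)) (hq : 1 < q) {a b r : ℝ} (ha : 0 < a)
    (hab : a ≤ b) :
    IntegrableOn (fun t => F f t ^ q * t ^ r) (Ioc a b) := by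
  refine (ContinuousOn.integrableOn_Icc ?_).mono_set Ioc_subset_Icc_self
  have hFc : ContinuousOn (F f) (Icc a b) :=
    (F_cont hf0 hmono hloc ha).mono Icc_subset_Ici_self
  refine (hFc.rpow_const fun x _ => Or.inr (by linarith)).mul
    (continuousOn_id.rpow_const fun x hx => Or.inl (by have := ha.trans_le hx.1; positivity))

lemma key_identity (hf0 : ∀ t, 0 < t → 0 ≤ f t) (hmono : AntitoneOn f (Ioi 0))
    (hloc : ∀ t, 0 < t → IntegrableOn f (Ioc 0 t)) (hq : 1 < q) {a b : ℝ} (ha : 0 < a)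
    (hab : a ≤ b) :
    q * ∫ t in Ioc a b, L f t * F f t ^ (q-1) * t ^ (1-q) =
      F f b ^ q * b ^ (1-q) - F f a ^ q * a ^ (1-q)
        + (q-1) * ∫ t in Ioc a b, F f t ^ q * t ^ (-q) := by
  have hb : 0 < b := ha.trans_le hab
  set G : ℝ → ℝ := fun t => F f t ^ q * t ^ (1-q) with hG
  set G' : ℝ → ℝ := fun t => q * F f t ^ (q-1) * L f t * t ^ (1-q)
      + F f t ^ q * ((1-q) * t ^ (1-q-1)) with hG'
  have hcont : ContinuousOn G (Icc a b) := by
    have hFc : ContinuousOn (F f) (Icc a b) :=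
      (F_cont hf0 hmono hloc ha).mono Icc_subset_Ici_self
    exact (hFc.rpow_const fun x _ => Or.inr (by linarith)).mul
      (continuousOn_id.rpow_const fun x hx => Or.inl (by have := ha.trans_le hx.1; positivity))
  have hderiv : ∀ x ∈ Ioo a b, HasDerivWithinAt G (G' x) (Ioi x) x := by
    intro x hx
    have hxpos : 0 < x := ha.trans hx.1
    have hd1 : HasDerivWithinAt (F f) (L f x) (Ioi x) x := F_hasDeriv hf0 hmono hloc hxpos
    have hd2 : HasDerivWithinAt (fun u => F f u ^ q) (q * F f x ^ (q-1) * L f x)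
        (Ioi x) x :=
      (Real.hasDerivAt_rpow_const (Or.inr hq.le)).comp_hasDerivWithinAt x hd1
    have hd3 : HasDerivWithinAt (fun u : ℝ => u ^ (1-q)) ((1-q) * x ^ (1-q-1)) (Ioi x) x :=
      (Real.hasDerivAt_rpow_const (Or.inl hxpos.ne')).hasDerivWithinAt
    exact hd2.mul hd3
  have hXint : IntegrableOn (fun t => L f t * F f t ^ (q-1) * t ^ (1-q)) (Ioc a b) :=
    X_integrable hf0 hmono hloc hq ha hab
  have hYint : IntegrableOn (fun t => F f t ^ q * t ^ (1-q-1)) (Ioc a b) :=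
    Y_integrable hf0 hmono hloc hq ha hab
  have hX1 : IntegrableOn (fun t => q * F f t ^ (q-1) * L f t * t ^ (1-q)) (Ioc a b) :=
    (hXint.const_mul q).congr (Filter.Eventually.of_forall fun t => by ring)
  have hX2 : IntegrableOn (fun t => F f t ^ q * ((1-q) * t ^ (1-q-1))) (Ioc a b) :=
    (hYint.const_mul (1-q)).congr (Filter.Eventually.of_forall fun t => by ring)
  have hG'int : IntervalIntegrable G' volume a b := by
    rw [intervalIntegrable_iff_integrableOn_Ioc_of_le hab]
    exact hX1.add hX2
  have hftc := intervalIntegral.integral_eq_sub_of_hasDeriv_right_of_le hab hcont hderiv hG'int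
  rw [intervalIntegral.integral_of_le hab] at hftc
  have hsplit : ∫ t in Ioc a b, G' t =
      q * (∫ t in Ioc a b, L f t * F f t ^ (q-1) * t ^ (1-q))
        + (1-q) * ∫ t in Ioc a b, F f t ^ q * t ^ (1-q-1) := by
    rw [hG']
    rw [integral_add hX1 hX2, ← integral_const_mul, ← integral_const_mul]
    congr 1
    · exact setIntegral_congr_fun measurableSet_Ioc fun t _ => by ring
    · exact setIntegral_congr_fun measurableSet_Ioc fun t _ => by ring
  have hexp : (1 - q - 1 : ℝ) = -q := by ring
  rw [hsplit, hexp] at hftc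
  simp only [hG] at hftc
  linarith

lemma f_aemeas (hloc : ∀ t, 0 < t → IntegrableOn f (Ioc 0 t)) :
    AEMeasurable f (volume.restrict (Ioi (0:ℝ))) := by
  have hU : Ioi (0:ℝ) = ⋃ n : ℕ, Ioc 0 ((n:ℝ)+1) := by
    ext x
    simp only [mem_Ioi, mem_iUnion, mem_Ioc]
    constructor
    · intro hx
      obtain ⟨n, hn⟩ := exists_nat_ge x
      exact ⟨n, hx, by linarith⟩
    · rintro ⟨n, h1, _⟩; exact h1
  rw [hU, aemeasurable_iUnion_iff]
  intro n
  exact ((hloc ((n:ℝ)+1) (by positivity)).aestronglyMeasurable).aemeasurable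

lemma Fstar_contOn (hf0 : ∀ t, 0 < t → 0 ≤ f t) (hmono : AntitoneOn f (Ioi 0))
    (hloc : ∀ t, 0 < t → IntegrableOn f (Ioc 0 t)) :
    ContinuousOn (fun t => (1/t) * F f t) (Ioi (0:ℝ)) := by
  intro t ht
  have ht0 : (0:ℝ) < t := ht
  have h1 : ContinuousWithinAt (F f) (Ioi 0) t := by
    refine ((F_cont hf0 hmono hloc (half_pos ht0)).continuousWithinAt
      (mem_Ici.2 (by linarith))).mono_of_mem_nhdsWithin
      (mem_nhdsWithin_of_mem_nhds (Ici_mem_nhds (by linarith)))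
  exact ((continuousAt_const.div continuousAt_id ht0.ne').continuousWithinAt).mul h1

lemma hE_aemeas (hf0 : ∀ t, 0 < t → 0 ≤ f t) (hmono : AntitoneOn f (Ioi 0))
    (hloc : ∀ t, 0 < t → IntegrableOn f (Ioc 0 t)) :
    AEMeasurable (fun t => ENNReal.ofReal ((1/t) * F f t) ^ q)
      (volume.restrict (Ioi (0:ℝ))) :=
  (((Fstar_contOn hf0 hmono hloc).aemeasurable measurableSet_Ioi).ennreal_ofReal).pow_const q

lemma gE_aemeas (hloc : ∀ t, 0 < t → IntegrableOn f (Ioc 0 t)) :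
    AEMeasurable (fun t => ENNReal.ofReal (f t) ^ q) (volume.restrict (Ioi (0:ℝ))) :=
  ((f_aemeas hloc).ennreal_ofReal).pow_const q

lemma exists_nu (g : ℝ → ℝ≥0∞) (hg : AEMeasurable g (volume.restrict (Ioi (0:ℝ)))) :
    ∃ ν : Measure ℝ, ∀ s, MeasurableSet s → s ⊆ Ioi 0 → ν s = ∫⁻ t in s, g t := by
  refine ⟨(volume.restrict (Ioi 0)).withDensity (hg.mk g), fun s hs hsub => ?_⟩
  rw [withDensity_apply _ hs, Measure.restrict_restrict hs, inter_eq_self_of_subset_left hsub]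
  exact lintegral_congr_ae (ae_mono (Measure.restrict_mono hsub le_rfl) hg.ae_eq_mk.symm)

lemma interval_bound (hf0 : ∀ t, 0 < t → 0 ≤ f t) (hmono : AntitoneOn f (Ioi 0))
    (hloc : ∀ t, 0 < t → IntegrableOn f (Ioc 0 t)) (hq : 1 < q) {a b : ℝ} (ha : 0 < a)
    (hab : a ≤ b) :
    ∫⁻ t in Ioc a b, ENNReal.ofReal (f t) ^ q ≤
      ENNReal.ofReal (F f b ^ q * b ^ (1-q)) +
        ENNReal.ofReal ((q-1)/q) * ∫⁻ t in Ioi 0, ENNReal.ofReal ((1/t) * F f t) ^ q := by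
  have hq0 : (0:ℝ) < q := by linarith
  have hae : ∀ᵐ t ∂(volume.restrict (Ioc a b)),
      ENNReal.ofReal (f t) ^ q ≤ ENNReal.ofReal (L f t * F f t ^ (q-1) * t ^ (1-q)) := by
    have hLf : ∀ᵐ t ∂(volume.restrict (Ioc a b)), L f t = f t :=
      ae_mono (Measure.restrict_mono (fun x hx => ha.trans hx.1) le_rfl) (L_ae_eq hmono)
    filter_upwards [hLf, ae_restrict_mem measurableSet_Ioc] with t hLt htm
    have ht : 0 < t := ha.trans htm.1
    rw [ENNReal.ofReal_rpow_of_nonneg (hf0 t ht) hq0.le]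
    refine ENNReal.ofReal_le_ofReal ?_
    rw [hLt]
    rcases eq_or_lt_of_le (hf0 t ht) with hzero | hpos
    · rw [← hzero, Real.zero_rpow hq0.ne', zero_mul, zero_mul]
    · have hft : f t ≤ F f t / t := (le_div_iff₀ ht).2 (by linarith [tf_le_F hmono hloc ht])
      have h1 : f t ^ q = f t * f t ^ (q-1) := by
        have h2 := Real.rpow_add hpos 1 (q-1)
        rw [show (1:ℝ)+(q-1)=q by ring, Real.rpow_one] at h2
        exact h2
      rw [h1]
      have h3 : f t ^ (q-1) ≤ (F f t / t) ^ (q-1) :=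
        Real.rpow_le_rpow (hf0 t ht) hft (by linarith)
      have h4 : (F f t / t) ^ (q-1) = F f t ^ (q-1) * t ^ (1-q) := by
        rw [Real.div_rpow (F_nonneg hf0 t) ht.le, div_eq_mul_inv, ← Real.rpow_neg ht.le,
          show -(q-1) = 1-q by ring]
      calc f t * f t ^ (q-1) ≤ f t * ((F f t / t) ^ (q-1)) :=
            mul_le_mul_of_nonneg_left h3 (hf0 t ht)
        _ = f t * F f t ^ (q-1) * t ^ (1-q) := by rw [h4]; ring
  have hXint := X_integrable hf0 hmono hloc hq ha hab
  have hXnn : 0 ≤ᵐ[volume.restrict (Ioc a b)]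
      fun t => L f t * F f t ^ (q-1) * t ^ (1-q) := by
    filter_upwards [ae_restrict_mem measurableSet_Ioc] with t htm
    have ht : 0 < t := ha.trans htm.1
    exact mul_nonneg (mul_nonneg (L_nonneg hf0 hmono ht)
      (Real.rpow_nonneg (F_nonneg hf0 t) _)) (Real.rpow_nonneg ht.le _)
  have hB1 : ∫⁻ t in Ioc a b, ENNReal.ofReal (f t) ^ q
      ≤ ENNReal.ofReal (∫ t in Ioc a b, L f t * F f t ^ (q-1) * t ^ (1-q)) := by
    rw [ofReal_integral_eq_lintegral_ofReal hXint hXnn]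
    exact lintegral_mono_ae hae
  have hYint := Y_integrable hf0 hmono hloc hq (r := -q) ha hab
  have hYnn : 0 ≤ ∫ t in Ioc a b, F f t ^ q * t ^ (-q) :=
    setIntegral_nonneg measurableSet_Ioc fun t htm =>
      mul_nonneg (Real.rpow_nonneg (F_nonneg hf0 t) _)
        (Real.rpow_nonneg (ha.trans htm.1).le _)
  have hkey := key_identity hf0 hmono hloc hq ha hab
  have hGa : 0 ≤ F f a ^ q * a ^ (1-q) :=
    mul_nonneg (Real.rpow_nonneg (F_nonneg hf0 a) _) (Real.rpow_nonneg ha.le _)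
  have hGb : 0 ≤ F f b ^ q * b ^ (1-q) :=
    mul_nonneg (Real.rpow_nonneg (F_nonneg hf0 b) _)
      (Real.rpow_nonneg (ha.trans_le hab).le _)
  have hC : ∫ t in Ioc a b, L f t * F f t ^ (q-1) * t ^ (1-q)
      ≤ F f b ^ q * b ^ (1-q) + (q-1)/q * ∫ t in Ioc a b, F f t ^ q * t ^ (-q) := by
    have hdiv : q * ((q-1)/q * ∫ t in Ioc a b, F f t ^ q * t ^ (-q))
        = (q-1) * ∫ t in Ioc a b, F f t ^ q * t ^ (-q) := by
      field_simp
    nlinarith [hkey, hGa, hGb, hYnn, hq0]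
  have hD : ENNReal.ofReal (∫ t in Ioc a b, F f t ^ q * t ^ (-q))
      ≤ ∫⁻ t in Ioi 0, ENNReal.ofReal ((1/t) * F f t) ^ q := by
    rw [ofReal_integral_eq_lintegral_ofReal hYint
      (by filter_upwards [ae_restrict_mem measurableSet_Ioc] with t htm;
          exact mul_nonneg (Real.rpow_nonneg (F_nonneg hf0 t) _)
            (Real.rpow_nonneg (ha.trans htm.1).le _))]
    have heq : ∀ t ∈ Ioc a b, ENNReal.ofReal (F f t ^ q * t ^ (-q))
        = ENNReal.ofReal ((1/t) * F f t) ^ q := by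
      intro t htm
      have ht : 0 < t := ha.trans htm.1
      rw [ENNReal.ofReal_rpow_of_nonneg (mul_nonneg (by positivity) (F_nonneg hf0 t)) hq0.le]
      congr 1
      rw [Real.mul_rpow (by positivity) (F_nonneg hf0 t), one_div,
        Real.inv_rpow ht.le, ← Real.rpow_neg ht.le]
      ring
    calc ∫⁻ t in Ioc a b, ENNReal.ofReal (F f t ^ q * t ^ (-q))
        = ∫⁻ t in Ioc a b, ENNReal.ofReal ((1/t) * F f t) ^ q :=
          setLIntegral_congr_fun measurableSet_Ioc heq
      _ ≤ _ := lintegral_mono_set (fun x hx => ha.trans hx.1)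
  calc ∫⁻ t in Ioc a b, ENNReal.ofReal (f t) ^ q
      ≤ ENNReal.ofReal (∫ t in Ioc a b, L f t * F f t ^ (q-1) * t ^ (1-q)) := hB1
    _ ≤ ENNReal.ofReal (F f b ^ q * b ^ (1-q)
          + (q-1)/q * ∫ t in Ioc a b, F f t ^ q * t ^ (-q)) := ENNReal.ofReal_le_ofReal hC
    _ ≤ ENNReal.ofReal (F f b ^ q * b ^ (1-q))
          + ENNReal.ofReal ((q-1)/q * ∫ t in Ioc a b, F f t ^ q * t ^ (-q)) :=
        ENNReal.ofReal_add_le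
    _ = ENNReal.ofReal (F f b ^ q * b ^ (1-q))
          + ENNReal.ofReal ((q-1)/q) * ENNReal.ofReal (∫ t in Ioc a b, F f t ^ q * t ^ (-q)) := by
        congr 1
        rw [ENNReal.ofReal_mul (div_nonneg (by linarith) (by linarith))]
    _ ≤ _ := by
        exact add_le_add_right (mul_le_mul_right hD _) _

lemma boundary_bound (hf0 : ∀ t, 0 < t → 0 ≤ f t) (hmono : AntitoneOn f (Ioi 0))
    (hloc : ∀ t, 0 < t → IntegrableOn f (Ioc 0 t)) (hq : 1 < q) {b : ℝ} (hb : 0 < b) :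
    ENNReal.ofReal (F f b ^ q * b ^ (1-q)) ≤
      2 * ∫⁻ t in Ioc (b/2) b, ENNReal.ofReal ((1/t) * F f t) ^ q := by
  have hq0 : (0:ℝ) < q := by linarith
  set c : ℝ≥0∞ := ENNReal.ofReal ((1/b) * F f b) ^ q with hc
  have h1 : c * ENNReal.ofReal (b/2) ≤ ∫⁻ t in Ioc (b/2) b, ENNReal.ofReal ((1/t) * F f t) ^ q := by
    have : c * ENNReal.ofReal (b/2) = ∫⁻ _ in Ioc (b/2) b, c := by
      rw [setLIntegral_const, Real.volume_Ioc, show b - b/2 = b/2 by ring]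
    rw [this]
    refine lintegral_mono_ae ?_
    filter_upwards [ae_restrict_mem measurableSet_Ioc] with t htm
    have ht : 0 < t := (half_pos hb).trans htm.1
    refine ENNReal.rpow_le_rpow (ENNReal.ofReal_le_ofReal ?_) hq0.le
    have hFa := Fstar_anti hf0 hmono hloc ht htm.2
    rw [one_div, one_div, inv_mul_eq_div, inv_mul_eq_div, div_le_div_iff₀ hb ht]
    linarith
  have h2 : ENNReal.ofReal (F f b ^ q * b ^ (1-q)) = 2 * (c * ENNReal.ofReal (b/2)) := by
    rw [hc, ENNReal.ofReal_rpow_of_nonneg (mul_nonneg (by positivity) (F_nonneg hf0 b)) hq0.le,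
      ← ENNReal.ofReal_mul (Real.rpow_nonneg (mul_nonneg (by positivity) (F_nonneg hf0 b)) _),
      show (2:ℝ≥0∞) = ENNReal.ofReal 2 by simp,
      ← ENNReal.ofReal_mul (by norm_num)]
    congr 1
    have hbq : (0:ℝ) < b ^ q := Real.rpow_pos_of_pos hb q
    rw [Real.mul_rpow (by positivity) (F_nonneg hf0 b), one_div, Real.inv_rpow hb.le,
      Real.rpow_sub hb]  -- b ^ (1-q) = b^1 / b^q
    rw [Real.rpow_one]
    field_simp
  rw [h2]
  exact mul_le_mul_right h1 _

lemma main_bound (hf0 : ∀ t, 0 < t → 0 ≤ f t) (hmono : AntitoneOn f (Ioi 0))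
    (hloc : ∀ t, 0 < t → IntegrableOn f (Ioc 0 t)) (hq : 1 < q) :
    ∫⁻ t in Ioi (0:ℝ), ENNReal.ofReal (f t) ^ q ≤
      ENNReal.ofReal ((q-1)/q) * ∫⁻ t in Ioi (0:ℝ), ENNReal.ofReal ((1/t) * F f t) ^ q := by
  have hq0 : (0:ℝ) < q := by linarith
  set B := ∫⁻ t in Ioi (0:ℝ), ENNReal.ofReal ((1/t) * F f t) ^ q with hB
  have hc0 : ENNReal.ofReal ((q-1)/q) ≠ 0 := by
    simp only [ne_eq, ENNReal.ofReal_eq_zero, not_le]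
    exact div_pos (by linarith) hq0
  by_cases hBtop : B = ⊤
  · rw [hBtop, ENNReal.mul_top hc0]; exact le_top
  -- tail measure
  obtain ⟨ν, hν⟩ := exists_nu _ (hE_aemeas hf0 hmono hloc)
  have hν_le : ∀ s, MeasurableSet s → s ⊆ Ioi 0 → ν s ≤ B := by
    intro s hs hsub
    rw [hν s hs hsub]
    exact lintegral_mono_set hsub
  have htail : Tendsto (fun n : ℕ => ν (Ioi ((n:ℝ)+1))) atTop (𝓝 0) := by
    have hempty : ⋂ n : ℕ, Ioi ((n:ℝ)+1) = ∅ := by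
      ext x
      simp only [mem_iInter, mem_Ioi, mem_empty_iff_false, iff_false, not_forall, not_lt]
      obtain ⟨n, hn⟩ := exists_nat_ge x
      exact ⟨n, by linarith⟩
    have := tendsto_measure_iInter_atTop (μ := ν) (s := fun n : ℕ => Ioi ((n:ℝ)+1))
      (fun n => measurableSet_Ioi.nullMeasurableSet)
      (fun m n hmn => Ioi_subset_Ioi (by exact_mod_cast add_le_add_left (Nat.cast_le.2 hmn) 1))
      ⟨0, by
        refine ne_top_of_le_ne_top hBtop (hν_le _ measurableSet_Ioi ?_)
        exact Ioi_subset_Ioi (by norm_num)⟩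
    rwa [hempty, measure_empty] at this
  -- boundary term tendsto 0
  have hbound : ∀ n : ℕ, ENNReal.ofReal
      (F f (2*((n:ℝ)+1)) ^ q * (2*((n:ℝ)+1)) ^ (1-q)) ≤ 2 * ν (Ioi ((n:ℝ)+1)) := by
    intro n
    have hn1 : (0:ℝ) < (n:ℝ)+1 := by positivity
    have hb : (0:ℝ) < 2*((n:ℝ)+1) := by positivity
    refine (boundary_bound hf0 hmono hloc hq hb).trans ?_
    have hhalf : (2*((n:ℝ)+1))/2 = (n:ℝ)+1 := by ring
    rw [hhalf]
    refine mul_le_mul_right ?_ 2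
    rw [hν _ measurableSet_Ioi (Ioi_subset_Ioi hn1.le)]
    exact lintegral_mono_set Ioc_subset_Ioi_self
  have hGb0 : Tendsto (fun n : ℕ => ENNReal.ofReal
      (F f (2*((n:ℝ)+1)) ^ q * (2*((n:ℝ)+1)) ^ (1-q))) atTop (𝓝 0) := by
    have h2ν : Tendsto (fun n : ℕ => 2 * ν (Ioi ((n:ℝ)+1))) atTop (𝓝 0) := by
      have := ENNReal.Tendsto.const_mul (a := (2:ℝ≥0∞)) htail (Or.inr (by norm_num))
      simpa using this
    exact tendsto_of_tendsto_of_tendsto_of_le_of_le' tendsto_const_nhds h2ν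
      (Eventually.of_forall fun n => zero_le) (Eventually.of_forall hbound)
  -- sup decomposition of LHS
  obtain ⟨νg, hνg⟩ := exists_nu _ (gE_aemeas (q := q) hloc)
  set S : ℕ → Set ℝ := fun n => Ioc (1/((n:ℝ)+1)) (2*((n:ℝ)+1)) with hS
  have hSsub : ∀ n, S n ⊆ Ioi 0 := fun n x hx => lt_trans (by positivity) hx.1
  have hSmono : Monotone S := by
    intro m n hmn
    have h1 : ((m:ℝ)+1) ≤ ((n:ℝ)+1) := by exact_mod_cast add_le_add_left (Nat.cast_le.2 hmn) 1
    refine Ioc_subset_Ioc ?_ (by linarith)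
    exact one_div_le_one_div_of_le (by positivity) h1
  have hSU : ⋃ n, S n = Ioi (0:ℝ) := by
    apply subset_antisymm
    · exact iUnion_subset hSsub
    · intro x hx
      have hx0 : (0:ℝ) < x := hx
      obtain ⟨n, hn⟩ := exists_nat_ge (max (1/x) x)
      have hn1 : 1/x ≤ (n:ℝ) := le_trans (le_max_left _ _) hn
      have hn2 : x ≤ (n:ℝ) := le_trans (le_max_right _ _) hn
      refine mem_iUnion.2 ⟨n, ?_, by push_cast; nlinarith⟩
      rw [div_lt_iff₀ (by positivity)]
      rw [div_le_iff₀ hx0] at hn1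
      nlinarith
  have hLHS : ∫⁻ t in Ioi (0:ℝ), ENNReal.ofReal (f t) ^ q = ⨆ n, νg (S n) := by
    rw [← hνg _ measurableSet_Ioi subset_rfl, ← hSU,
      (hSmono.directed_le).measure_iUnion]
  rw [hLHS]
  refine iSup_le fun m => ?_
  -- limit argument
  have hu : Tendsto (fun n : ℕ => ENNReal.ofReal
      (F f (2*((n:ℝ)+1)) ^ q * (2*((n:ℝ)+1)) ^ (1-q)) + ENNReal.ofReal ((q-1)/q) * B)
      atTop (𝓝 (ENNReal.ofReal ((q-1)/q) * B)) := by
    have := hGb0.add (tendsto_const_nhds (x := ENNReal.ofReal ((q-1)/q) * B) (f := atTop))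
    simpa using this
  refine ge_of_tendsto hu ?_
  refine eventually_atTop.2 ⟨m, fun n hmn => ?_⟩
  have h1 : νg (S m) ≤ νg (S n) := measure_mono (hSmono hmn)
  refine h1.trans ?_
  rw [hνg _ measurableSet_Ioc (hSsub n)]
  have ha : (0:ℝ) < 1/((n:ℝ)+1) := by positivity
  have hab : 1/((n:ℝ)+1) ≤ 2*((n:ℝ)+1) := by
    rw [div_le_iff₀ (by positivity)]
    nlinarith [Nat.cast_nonneg (α := ℝ) n]
  exact interval_bound hf0 hmono hloc hq ha hab

end Stmt5

/-- Sharp reverse Hardy inequality for nonincreasing functions: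
`(∫_0^∞ f^q)^{1/q} ≤ ((q-1)/q)^{1/q} (∫_0^∞ (f^{**})^q)^{1/q}`, where
`f^{**}(t) = (1/t)∫_0^t f`. Both sides may be infinite. -/
theorem stmt5 (f : ℝ → ℝ) (q : ℝ) (hq : 1 < q)
    (hf0 : ∀ t, 0 < t → 0 ≤ f t) (hmono : AntitoneOn f (Ioi 0))
    (hloc : ∀ t, 0 < t → IntegrableOn f (Ioc 0 t)) :
    (∫⁻ t in Ioi (0:ℝ), ENNReal.ofReal (f t) ^ q) ^ (1/q)
      ≤ ENNReal.ofReal (((q - 1)/q) ^ (1/q)) *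
        (∫⁻ t in Ioi (0:ℝ),
          ENNReal.ofReal ((1/t) * ∫ s in Ioc (0:ℝ) t, f s) ^ q) ^ (1/q) := by
  have hq0 : (0:ℝ) < q := by linarith
  have h := Stmt5.main_bound hf0 hmono hloc hq
  have h2 := ENNReal.rpow_le_rpow h (by positivity : (0:ℝ) ≤ 1/q)
  rw [ENNReal.mul_rpow_of_nonneg _ _ (by positivity : (0:ℝ) ≤ 1/q),
    ENNReal.ofReal_rpow_of_nonneg (div_nonneg (by linarith) hq0.le) (by positivity)] at h2
  exact h2
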